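/- In the Laurent polynomial ring ℂ[z, z⁻¹], the pair (1+z, 1+z²) generates the unit ideal, but there is no element v ∈ ℂ[z, z⁻¹] such that (1+z) + v·(1+z²) is invertible in ℂ[z, z⁻¹]. -/

import Mathlib

open LaurentPolynomial Polynomial

/-- Evaluation of a Laurent polynomial at a unit of `ℂ`. -/
noncomputable def evL (u : ℂˣ) : LaurentPolynomial ℂ →ₐ[ℂ] ℂ :=
  AddMonoidAlgebra.lift ℂ ℂ ℤ ((Units.coeHom ℂ).comp (zpowersHom ℂˣ u))

lemma evL_T (u : ℂˣ) (n : ℤ) : evL u (T n) = (u : ℂ) ^ n := by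
  show AddMonoidAlgebra.lift ℂ ℂ ℤ _ (AddMonoidAlgebra.single n 1) = _
  erw [AddMonoidAlgebra.lift_single]
  simp

lemma evL_C (u : ℂˣ) (c : ℂ) : evL u (LaurentPolynomial.C c) = c := by
  rw [LaurentPolynomial.C_eq_algebraMap]; exact (evL u).commutes c

/-- A unit of `ℂ[T;T⁻¹]` has the form `C c * T d`. -/
lemma unit_form {f : LaurentPolynomial ℂ} (hf : IsUnit f) :
    ∃ (c : ℂ) (d : ℤ), f = LaurentPolynomial.C c * T d := by
  obtain ⟨g, hg⟩ := hf.exists_right_inv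
  obtain ⟨n, p, hp⟩ := exists_T_pow f
  obtain ⟨m, q, hq⟩ := exists_T_pow g
  have hpq : p * q = X ^ (n + m) := by
    apply Polynomial.toLaurent_injective
    rw [map_mul, hp, hq, Polynomial.toLaurent_X_pow]
    push_cast
    rw [T_add, mul_mul_mul_comm, hg, one_mul]
  have hdvd : p ∣ X ^ (n + m) := ⟨q, hpq.symm⟩
  obtain ⟨i, hi, hassoc⟩ := (dvd_prime_pow Polynomial.prime_X (n + m)).mp hdvd
  obtain ⟨w, hw⟩ := hassoc.symm
  obtain ⟨c, -, hc⟩ := Polynomial.isUnit_iff.mp w.isUnit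
  refine ⟨c, (i : ℤ) - n, ?_⟩
  have hp2 : p = X ^ i * Polynomial.C c := by rw [hc, hw]
  have hfT : f * T (n : ℤ) = T (i : ℤ) * LaurentPolynomial.C c := by
    rw [← hp, hp2, map_mul, Polynomial.toLaurent_X_pow, Polynomial.toLaurent_C]
  have h2 := congrArg (· * T (-(n : ℤ))) hfT
  simp only [mul_assoc, ← T_add] at h2
  rw [add_neg_cancel, T_zero, mul_one] at h2
  rw [h2, sub_eq_add_neg, T_add]
  ring

/-- In `ℂ[z, z⁻¹]`, the pair `(1 + z, 1 + z²)` generates the unit ideal, yet no element `v`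
makes `(1 + z) + v·(1 + z²)` invertible. -/
theorem laurent_unimodular_pair_not_reducible :
    (∃ a b : LaurentPolynomial ℂ, a * (1 + T 1) + b * (1 + T 2) = 1) ∧
    ¬ ∃ v : LaurentPolynomial ℂ, IsUnit ((1 + T 1) + v * (1 + T 2)) := by
  constructor
  · refine ⟨LaurentPolynomial.C (2⁻¹) * (T (-1) + 1),
      -(LaurentPolynomial.C (2⁻¹) * T (-1)), ?_⟩
    have h1 : (T (-1) : LaurentPolynomial ℂ) * T 1 = 1 := by rw [← T_add]; norm_num
    have h2 : (T (-1) : LaurentPolynomial ℂ) * T 2 = T 1 := by rw [← T_add]; norm_num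
    have h3 : (LaurentPolynomial.C (2⁻¹ : ℂ)) * (1 + 1) = 1 := by
      rw [show ((1 : LaurentPolynomial ℂ) + 1) = LaurentPolynomial.C 2 from by
        rw [← map_one (LaurentPolynomial.C (R := ℂ)), ← map_add]; norm_num, ← map_mul]
      norm_num
    calc LaurentPolynomial.C (2⁻¹:ℂ) * (T (-1) + 1) * (1 + T 1)
          + -(LaurentPolynomial.C 2⁻¹ * T (-1)) * (1 + T 2)
        = LaurentPolynomial.C (2⁻¹:ℂ) * ((T (-1) * T 1 + 1) + (T 1 - T (-1) * T 2)) := by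
          ring
      _ = 1 := by rw [h1, h2]; linear_combination h3
  · rintro ⟨v, hv⟩
    obtain ⟨c, d, hf⟩ := unit_form hv
    set uI : ℂˣ := Units.mk0 Complex.I Complex.I_ne_zero with huI
    set uJ : ℂˣ := Units.mk0 (-Complex.I) (neg_ne_zero.mpr Complex.I_ne_zero) with huJ
    have evalf : ∀ u : ℂˣ, (1 : ℂ) + (u : ℂ) ^ 2 = 0 →
        evL u ((1 + T 1) + v * (1 + T 2)) = 1 + (u : ℂ) := by
      intro u hu
      have : evL u (1 + T 2) = 0 := by
        rw [map_add, map_one, evL_T, zpow_two, ← sq, hu]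
      rw [map_add, map_add, map_one, evL_T, map_mul, this, mul_zero, add_zero, zpow_one]
    have hI2 : (Complex.I : ℂ) ^ 2 = -1 := Complex.I_sq
    have eI : (1 : ℂ) + Complex.I = c * Complex.I ^ d := by
      have := evalf uI (by simp [huI, hI2])
      rw [hf, map_mul, evL_C, evL_T] at this
      simpa [huI] using this.symm
    have eJ : (1 : ℂ) - Complex.I = c * (-Complex.I) ^ d := by
      have := evalf uJ (by simp [huJ, hI2])
      rw [hf, map_mul, evL_C, evL_T] at this
      rw [huJ] at this
      simp only [Units.val_mk0] at this
      linear_combination -this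
    -- (1+I)(1-I) = 2 gives c^2 = 2; (1+I)^2 = 2I gives 2I = c^2 * (-1)^d
    have key1 : (2 : ℂ) = c ^ 2 := by
      have : ((1 : ℂ) + Complex.I) * (1 - Complex.I)
          = (c * Complex.I ^ d) * (c * (-Complex.I) ^ d) := by rw [← eI, ← eJ]
      have hm : (Complex.I : ℂ) ^ d * (-Complex.I) ^ d = 1 := by
        rw [← mul_zpow]
        simp [Complex.I_mul_I]
      calc (2 : ℂ) = (1 + Complex.I) * (1 - Complex.I) := by
            linear_combination hI2
        _ = c ^ 2 * (Complex.I ^ d * (-Complex.I) ^ d) := by rw [this]; ring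
        _ = c ^ 2 := by rw [hm, mul_one]
    have key2 : (2 : ℂ) * Complex.I = c ^ 2 * (-1) ^ d := by
      have : ((1 : ℂ) + Complex.I) * (1 + Complex.I)
          = (c * Complex.I ^ d) * (c * Complex.I ^ d) := by rw [← eI]
      have hm : (Complex.I : ℂ) ^ d * Complex.I ^ d = (-1) ^ d := by
        rw [← mul_zpow, ← sq, hI2]
      calc (2 : ℂ) * Complex.I = (1 + Complex.I) * (1 + Complex.I) := by
            linear_combination -hI2
        _ = c ^ 2 * (Complex.I ^ d * Complex.I ^ d) := by rw [this]; ring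
        _ = c ^ 2 * (-1) ^ d := by rw [hm]
    rw [← key1] at key2
    have hI : Complex.I = (-1) ^ d :=
      mul_left_cancel₀ (two_ne_zero : (2:ℂ) ≠ 0) key2
    have : (Complex.I : ℂ) * Complex.I = 1 := by
      rw [hI, ← mul_zpow]
      simp
    rw [Complex.I_mul_I] at this
    norm_num at this
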